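/- Fix a positive integer n and r ∈ {2, …, n − 1}. Then for every sufficiently small a ∈ (0,1) and every σ > 0, there exists a convex, 1-smooth function f : ℝ^{n×n} → ℝ such that: (1) f admits a rank-r minimizer X* over the unit trace-norm ball for which #σ_1(∇f(X*)) = r + 1 and σ_1(∇f(X*)) − σ_{r+2}(∇f(X*)) = σ; and (2) there exists a matrix X_a with ‖X_a‖_* ≤ 1, rank(X_a) = r, ‖X_a − X*‖_F ≤ √2·a, and such that for every η ∈ (0,1], rank(𝒢_η(X_a)) = r + 1. -/

import Mathlib

/- Common definitions: Frobenius norm and inner product, singular values in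
non-increasing order, trace (nuclear) norm, multiplicity of the top singular
value, Euclidean projection onto the trace-norm ball, the spectrahedron and its
projection, sorted eigenvalues of symmetric matrices, best rank-`r`
approximations, and the singular-value soft-thresholding (prox) operator. -/

open scoped BigOperators
open Matrix MeasureTheory ProbabilityTheory

attribute [local instance] Matrix.normedAddCommGroup Matrix.normedSpace

noncomputable section

/-- Frobenius norm of a real matrix. -/
def frobNorm {m n : ℕ} (X : Matrix (Fin m) (Fin n) ℝ) : ℝ :=
  Real.sqrt (∑ i, ∑ j, (X i j) ^ 2)

/-- Frobenius inner product of two real matrices. -/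
def frobInner {m n : ℕ} (A B : Matrix (Fin m) (Fin n) ℝ) : ℝ :=
  ∑ i, ∑ j, A i j * B i j

/-- The continuous linear functional `H ↦ ⟨G, H⟩` (Frobenius inner product);
`HasFDerivAt f (frobCLM G) X` says that `G` is the gradient of `f` at `X`. -/
def frobCLM {m n : ℕ} (G : Matrix (Fin m) (Fin n) ℝ) :
    Matrix (Fin m) (Fin n) ℝ →L[ℝ] ℝ :=
  LinearMap.toContinuousLinearMap
    { toFun := fun H => frobInner G H
      map_add' := fun x y => by
        simp [frobInner, Matrix.add_apply, mul_add, Finset.sum_add_distrib]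
      map_smul' := fun c x => by
        simp [frobInner, Matrix.smul_apply, smul_eq_mul, Finset.mul_sum, mul_left_comm] }

/-- The non-increasing (descending) rearrangement of a finite tuple of reals. -/
def sortedDesc {N : ℕ} (f : Fin N → ℝ) : Fin N → ℝ :=
  fun i => f (Tuple.sort f i.rev)

/-- The singular values of a real `m × n` matrix in non-increasing order
(the square roots of the eigenvalues of `Xᵀ * X`), padded with zeros so that
there are `n` of them. -/
def svalsFin {m n : ℕ} (X : Matrix (Fin m) (Fin n) ℝ) : Fin n → ℝ :=
  sortedDesc (fun i => Real.sqrt ((show (Xᵀ * X).IsHermitian by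
    rw [Matrix.IsHermitian, Matrix.conjTranspose_eq_transpose_of_trivial]
    rw [Matrix.transpose_mul, Matrix.transpose_transpose]).eigenvalues i))

/-- `svalI X i` is the `(i+1)`-th largest singular value of `X` (i.e. `0`-indexed:
`svalI X 0 = σ₁(X)`), interpreted as `0` when the index is out of range. -/
def svalI {m n : ℕ} (X : Matrix (Fin m) (Fin n) ℝ) (i : ℕ) : ℝ :=
  if h : i < n then svalsFin X ⟨i, h⟩ else 0

/-- The trace norm (nuclear norm): the sum of the singular values. -/
def traceNorm {m n : ℕ} (X : Matrix (Fin m) (Fin n) ℝ) : ℝ :=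
  ∑ i, svalsFin X i

/-- `#σ₁(X)`: the multiplicity of the largest singular value of `X`. -/
def multTop {m n : ℕ} (X : Matrix (Fin m) (Fin n) ℝ) : ℕ :=
  Nat.card {i : Fin n // svalsFin X i = svalI X 0}

/-- `P` is the Euclidean (Frobenius) projection of `X` onto the trace-norm ball
of radius `τ`. -/
def IsTraceBallProj {m n : ℕ} (τ : ℝ) (X P : Matrix (Fin m) (Fin n) ℝ) : Prop :=
  traceNorm P ≤ τ ∧ ∀ Z, traceNorm Z ≤ τ → frobNorm (X - P) ≤ frobNorm (X - Z)

/-- The Euclidean projection onto the trace-norm ball of radius `τ`. -/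
def projTraceBall {m n : ℕ} (τ : ℝ) (X : Matrix (Fin m) (Fin n) ℝ) :
    Matrix (Fin m) (Fin n) ℝ :=
  open scoped Classical in
  if h : ∃ P, IsTraceBallProj τ X P then h.choose else 0

/-- `Y` is a best rank-`r` approximation of `X` in Frobenius norm. -/
def IsBestRankApprox {m n : ℕ} (r : ℕ) (X Y : Matrix (Fin m) (Fin n) ℝ) : Prop :=
  Y.rank ≤ r ∧ ∀ Z : Matrix (Fin m) (Fin n) ℝ, Z.rank ≤ r → frobNorm (X - Y) ≤ frobNorm (X - Z)

/-- The spectrahedron: positive semidefinite matrices of unit trace. -/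
def SpectraSet (n : ℕ) : Set (Matrix (Fin n) (Fin n) ℝ) :=
  {X | X.PosSemidef ∧ X.trace = 1}

/-- `P` is the Euclidean (Frobenius) projection of `X` onto the spectrahedron. -/
def IsSpectraProj {n : ℕ} (X P : Matrix (Fin n) (Fin n) ℝ) : Prop :=
  P ∈ SpectraSet n ∧ ∀ Z ∈ SpectraSet n, frobNorm (X - P) ≤ frobNorm (X - Z)

/-- The Euclidean projection onto the spectrahedron. -/
def projSpectra {n : ℕ} (X : Matrix (Fin n) (Fin n) ℝ) : Matrix (Fin n) (Fin n) ℝ :=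
  open scoped Classical in
  if h : ∃ P, IsSpectraProj X P then h.choose else 0

/-- `evalI X i` is the `(i+1)`-th largest eigenvalue of the symmetric matrix `X`
(`0`-indexed: `evalI X 0 = λ₁(X)`, `evalI X (n-1) = λ_n(X)`); junk value `0` if
`X` is not symmetric or the index is out of range. -/
def evalI {n : ℕ} (X : Matrix (Fin n) (Fin n) ℝ) (i : ℕ) : ℝ :=
  open scoped Classical in
  if h : i < n then
    (if hX : X.IsHermitian then sortedDesc hX.eigenvalues ⟨i, h⟩ else 0)
  else 0

/-- The multiplicity of the smallest eigenvalue of a symmetric matrix. -/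
def multMinEig {n : ℕ} (X : Matrix (Fin n) (Fin n) ℝ) : ℕ :=
  Nat.card {i : Fin n // evalI X i = evalI X (n - 1)}

/-- `Y` is the value at `X` of the singular-value soft-thresholding operator
`𝒯_η`, characterized as the proximal mapping of `η‖·‖_*`:
the (unique) minimizer of `Z ↦ ½‖X − Z‖_F² + η‖Z‖_*`. -/
def IsSVT {m n : ℕ} (η : ℝ) (X Y : Matrix (Fin m) (Fin n) ℝ) : Prop :=
  ∀ Z : Matrix (Fin m) (Fin n) ℝ,
    frobNorm (X - Y) ^ 2 / 2 + η * traceNorm Y ≤ frobNorm (X - Z) ^ 2 / 2 + η * traceNorm Z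

/-- The singular-value soft-thresholding operator `𝒯_η`. -/
def softThresh {m n : ℕ} (η : ℝ) (X : Matrix (Fin m) (Fin n) ℝ) :
    Matrix (Fin m) (Fin n) ℝ :=
  open scoped Classical in
  if h : ∃ Y, IsSVT η X Y then h.choose else 0

instance {m n : ℕ} : MeasurableSpace (Matrix (Fin m) (Fin n) ℝ) :=
  inferInstanceAs (MeasurableSpace (Fin m → Fin n → ℝ))

end

/-! ### Auxiliary lemmas -/

section Aux

theorem isHermitian_transpose_mul_self_aux {m n : ℕ} (X : Matrix (Fin m) (Fin n) ℝ) :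
    (Xᵀ * X).IsHermitian := by
  rw [Matrix.IsHermitian, Matrix.conjTranspose_eq_transpose_of_trivial]
  rw [Matrix.transpose_mul, Matrix.transpose_transpose]

open Polynomial in
theorem charpoly_diag_aux {N : ℕ} (d : Fin N → ℝ) :
    (Matrix.diagonal d).charpoly = ∏ i, (X - C (d i)) := by
  rw [Matrix.charpoly, ← Matrix.det_diagonal]
  congr 1
  ext i j
  by_cases h : i = j
  · subst h; simp [charmatrix_apply_eq, Matrix.diagonal_apply_eq]
  · simp [charmatrix_apply_ne _ _ _ h, Matrix.diagonal_apply_ne _ h]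

open Polynomial in
theorem charpoly_conj_aux {N : ℕ} (U A : Matrix (Fin N) (Fin N) ℝ) (h1 : U * star U = 1)
    (h2 : star U * U = 1) : (U * A * star U).charpoly = A.charpoly := by
  have hm : ∀ B B' : Matrix (Fin N) (Fin N) ℝ, (C : ℝ →+* ℝ[X]).mapMatrix (B * B')
      = (C : ℝ →+* ℝ[X]).mapMatrix B * (C : ℝ →+* ℝ[X]).mapMatrix B' := fun B B' => by
    exact _root_.map_mul _ _ _
  have hc : charmatrix (U * A * star U)
      = (C : ℝ →+* ℝ[X]).mapMatrix U * charmatrix A * (C : ℝ →+* ℝ[X]).mapMatrix (star U) := by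
    rw [charmatrix, charmatrix, mul_sub, sub_mul]
    congr 1
    · rw [← (Matrix.scalar_commute (X : ℝ[X]) (fun r => Commute.all _ r) _).eq, mul_assoc,
        ← hm, h1]
      simp
    · rw [← hm, ← hm, mul_assoc]
  rw [Matrix.charpoly, hc, Matrix.charpoly, Matrix.det_mul, Matrix.det_mul]
  rw [mul_comm, ← mul_assoc, ← Matrix.det_mul, ← hm, h2]
  simp

open Polynomial in
theorem roots_charpoly_diag_aux {N : ℕ} (d : Fin N → ℝ) :
    (Matrix.diagonal d).charpoly.roots = Multiset.map d Finset.univ.val := by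
  rw [charpoly_diag_aux, ← Polynomial.roots_multiset_prod_X_sub_C (Multiset.map d Finset.univ.val)]
  congr 1
  rw [Multiset.map_map, Finset.prod_eq_multiset_prod]
  rfl

theorem eig_multiset_diag_aux {N : ℕ} (v : Fin N → ℝ) (hA : (Matrix.diagonal v).IsHermitian) :
    Multiset.map hA.eigenvalues Finset.univ.val = Multiset.map v Finset.univ.val := by
  have hof : (RCLike.ofReal ∘ hA.eigenvalues : Fin N → ℝ) = hA.eigenvalues := by
    funext i; simp [RCLike.ofReal]
  have hsp := hA.spectral_theorem
  rw [hof] at hsp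
  have h1 : (hA.eigenvectorUnitary : Matrix (Fin N) (Fin N) ℝ) *
      star (hA.eigenvectorUnitary : Matrix (Fin N) (Fin N) ℝ) = 1 :=
    (Matrix.mem_unitaryGroup_iff).mp hA.eigenvectorUnitary.2
  have h2 : star (hA.eigenvectorUnitary : Matrix (Fin N) (Fin N) ℝ) *
      (hA.eigenvectorUnitary : Matrix (Fin N) (Fin N) ℝ) = 1 :=
    (Matrix.mem_unitaryGroup_iff').mp hA.eigenvectorUnitary.2
  have hcp : (Matrix.diagonal v).charpoly = (Matrix.diagonal hA.eigenvalues).charpoly := by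
    conv_lhs => rw [hsp]
    exact charpoly_conj_aux _ _ h1 h2
  have := congrArg Polynomial.roots hcp
  rw [roots_charpoly_diag_aux, roots_charpoly_diag_aux] at this
  exact this.symm

theorem eig_multiset_of_eq_aux {N : ℕ} {A : Matrix (Fin N) (Fin N) ℝ} (hA : A.IsHermitian)
    (v : Fin N → ℝ) (h : A = Matrix.diagonal v) :
    Multiset.map hA.eigenvalues Finset.univ.val = Multiset.map v Finset.univ.val := by
  subst h; exact eig_multiset_diag_aux v hA

theorem sortedDesc_antitone {N : ℕ} (f : Fin N → ℝ) : Antitone (sortedDesc f) := by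
  intro i j hij
  exact Tuple.monotone_sort f (by simpa using Fin.rev_le_rev.mpr hij)

theorem sortedDesc_of_antitone {N : ℕ} {f : Fin N → ℝ} (hf : Antitone f) :
    sortedDesc f = f := by
  have hmono : Monotone (f ∘ (Fin.revPerm : Equiv.Perm (Fin N))) := by
    intro i j hij
    exact hf (by simpa using Fin.rev_le_rev.mpr hij)
  have h := Tuple.comp_sort_eq_comp_iff_monotone.mpr hmono
  funext i
  have := congrFun h i.rev
  simp only [Function.comp_apply, Fin.revPerm_apply, Fin.rev_rev] at this
  exact (this ▸ rfl : sortedDesc f i = f i)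

theorem ofFn_multiset_aux {N : ℕ} (g : Fin N → ℝ) :
    (↑(List.ofFn g) : Multiset ℝ) = Multiset.map g Finset.univ.val := by
  rw [List.ofFn_eq_map, Fin.univ_def]
  simp [Multiset.map_coe]

theorem multiset_sortedDesc_aux {N : ℕ} (f : Fin N → ℝ) :
    Multiset.map (sortedDesc f) Finset.univ.val = Multiset.map f Finset.univ.val := by
  have h0 : sortedDesc f = f ∘ ⇑((Fin.revPerm : Equiv.Perm (Fin N)).trans (Tuple.sort f)) := rfl
  rw [h0]
  have h := Finset.map_univ_equiv ((Fin.revPerm : Equiv.Perm (Fin N)).trans (Tuple.sort f))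
  calc Multiset.map (f ∘ _) Finset.univ.val
      = Multiset.map f (Multiset.map
        (⇑((Fin.revPerm : Equiv.Perm (Fin N)).trans (Tuple.sort f))) Finset.univ.val) := by
        rw [Multiset.map_map]
    _ = Multiset.map f Finset.univ.val := by
        congr 1
        have := congrArg Finset.val h
        simpa [Finset.map] using this

theorem sortedDesc_congr_aux {N : ℕ} {f g : Fin N → ℝ}
    (h : Multiset.map f Finset.univ.val = Multiset.map g Finset.univ.val) :
    sortedDesc f = sortedDesc g := by
  have hperm : (List.ofFn (sortedDesc f)).Perm (List.ofFn (sortedDesc g)) := by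
    rw [← Multiset.coe_eq_coe, ofFn_multiset_aux, ofFn_multiset_aux,
      multiset_sortedDesc_aux, multiset_sortedDesc_aux, h]
  have hs1 : List.Pairwise (· ≥ ·) (List.ofFn (sortedDesc f)) :=
    List.pairwise_ofFn.mpr fun i j hij => sortedDesc_antitone f hij.le
  have hs2 : List.Pairwise (· ≥ ·) (List.ofFn (sortedDesc g)) :=
    List.pairwise_ofFn.mpr fun i j hij => sortedDesc_antitone g hij.le
  exact List.ofFn_injective (List.Perm.eq_of_pairwise' hs1 hs2 hperm)

theorem sum_sortedDesc_aux {N : ℕ} (f : Fin N → ℝ) : ∑ i, sortedDesc f i = ∑ i, f i := by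
  have h0 : ∑ i, sortedDesc f i
      = Finset.univ.sum (f ∘ ⇑((Fin.revPerm : Equiv.Perm (Fin N)).trans (Tuple.sort f))) := rfl
  rw [h0, ← Equiv.sum_comp ((Fin.revPerm : Equiv.Perm (Fin N)).trans (Tuple.sort f)) f]
  rfl

/-- Singular values of a diagonal matrix whose absolute values are non-increasing. -/
theorem svalsFin_diagonal {N : ℕ} (d : Fin N → ℝ) (hd : Antitone fun i => |d i|) :
    svalsFin (Matrix.diagonal d) = fun i => |d i| := by
  have hDD : (Matrix.diagonal d)ᵀ * Matrix.diagonal d = Matrix.diagonal (fun i => d i * d i) := by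
    rw [Matrix.diagonal_transpose, Matrix.diagonal_mul_diagonal]
  have hmul := eig_multiset_of_eq_aux (isHermitian_transpose_mul_self_aux (Matrix.diagonal d))
    (fun i => d i * d i) hDD
  have hms : Multiset.map
      (fun i => Real.sqrt ((isHermitian_transpose_mul_self_aux
        (Matrix.diagonal d)).eigenvalues i)) Finset.univ.val
      = Multiset.map (fun i => |d i|) Finset.univ.val := by
    have h1 : (fun i => Real.sqrt ((isHermitian_transpose_mul_self_aux
        (Matrix.diagonal d)).eigenvalues i))
        = Real.sqrt ∘ (isHermitian_transpose_mul_self_aux (Matrix.diagonal d)).eigenvalues :=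
      rfl
    have h2 : (fun i : Fin N => |d i|) = (fun x : ℝ => Real.sqrt (x * x)) ∘ d := by
      funext i; simp [Real.sqrt_mul_self_eq_abs]
    rw [h1, h2, ← Multiset.map_map, ← Multiset.map_map, hmul, Multiset.map_map,
      Multiset.map_map]
    rfl
  rw [svalsFin, sortedDesc_congr_aux hms, sortedDesc_of_antitone hd]

theorem card_subtype_fin_lt {N m : ℕ} (h : m ≤ N) :
    Fintype.card {i : Fin N // (i : ℕ) < m} = m := by
  have e : {i : Fin N // (i : ℕ) < m} ≃ Fin m :=
    { toFun := fun x => ⟨x.1, x.2⟩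
      invFun := fun j => ⟨⟨j.1, lt_of_lt_of_le j.2 h⟩, j.2⟩
      left_inv := fun x => by ext; rfl
      right_inv := fun j => rfl }
  rw [Fintype.card_congr e, Fintype.card_fin]

theorem sum_ite_fin {N R : ℕ} (hr : R < N) (c₁ c₂ : ℝ) :
    ∑ i : Fin N, (if (i : ℕ) < R then c₁ else if (i : ℕ) = R then c₂ else 0)
      = R * c₁ + c₂ := by
  rw [Fin.sum_univ_eq_sum_range (fun k => if k < R then c₁ else if k = R then c₂ else 0) N]
  rw [← Finset.sum_range_add_sum_Ico _ (Nat.succ_le_of_lt hr), Finset.sum_range_succ]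
  have h1 : ∑ k ∈ Finset.range R, (if k < R then c₁ else if k = R then c₂ else 0) = R * c₁ := by
    rw [Finset.sum_congr rfl (fun k hk => if_pos (Finset.mem_range.mp hk))]
    rw [Finset.sum_const, Finset.card_range, nsmul_eq_mul]
  have h2 : (if R < R then c₁ else if R = R then c₂ else 0) = c₂ := by
    rw [if_neg (lt_irrefl R), if_pos rfl]
  have h3 : ∑ k ∈ Finset.Ico (R + 1) N, (if k < R then c₁ else if k = R then c₂ else 0) = 0 := by
    refine Finset.sum_eq_zero fun k hk => ?_
    have hk1 := (Finset.mem_Ico.mp hk).1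
    rw [if_neg (by omega), if_neg (by omega)]
  rw [h1, h2, h3, add_zero]

end Aux

section LemB

open Matrix in
theorem sum_abs_diag_le_traceNorm {N : ℕ} (Z : Matrix (Fin N) (Fin N) ℝ) :
    ∑ i, |Z i i| ≤ traceNorm Z := by
  classical
  have hA : (Zᵀ * Z).IsHermitian := isHermitian_transpose_mul_self_aux Z
  set lam := hA.eigenvalues with hlam
  set u : Fin N → Fin N → ℝ := fun k => ⇑(hA.eigenvectorBasis k) with hu
  -- trace norm as sum of sqrt eigenvalues
  have htn : traceNorm Z = ∑ k, Real.sqrt (lam k) := by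
    rw [traceNorm]
    exact sum_sortedDesc_aux _
  -- eigenvalue nonnegativity
  have hlam0 : ∀ k, 0 ≤ lam k := fun k =>
    (Matrix.posSemidef_conjTranspose_mul_self Z).eigenvalues_nonneg k
  -- orthonormality of columns
  have hortho : ∀ k l, ∑ i, u k i * u l i = if k = l then 1 else 0 := by
    intro k l
    have h := orthonormal_iff_ite.mp hA.eigenvectorBasis.orthonormal k l
    rw [← h]
    simp [u, PiLp.inner_apply, RCLike.inner_apply, mul_comm]
  -- orthonormality of rows
  have hrow : ∀ i j, ∑ k, u k i * u k j = if i = j then 1 else 0 := by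
    intro i j
    have h1 : (hA.eigenvectorUnitary : Matrix (Fin N) (Fin N) ℝ) *
        star (hA.eigenvectorUnitary : Matrix (Fin N) (Fin N) ℝ) = 1 :=
      (Matrix.mem_unitaryGroup_iff).mp hA.eigenvectorUnitary.2
    have := congrFun (congrFun h1 i) j
    rw [Matrix.mul_apply] at this
    simp only [Matrix.star_apply, star_trivial] at this
    have h2 : ∑ k, u k i * u k j
        = ∑ k, (hA.eigenvectorUnitary : Matrix (Fin N) (Fin N) ℝ) i k *
          (hA.eigenvectorUnitary : Matrix (Fin N) (Fin N) ℝ) j k := by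
      refine Finset.sum_congr rfl fun k _ => ?_
      rw [Matrix.IsHermitian.eigenvectorUnitary_apply, Matrix.IsHermitian.eigenvectorUnitary_apply]
    rw [h2, this, Matrix.one_apply]
  -- norm of Z applied to eigenvector
  have hZu : ∀ k, ∑ i, (Z *ᵥ u k) i ^ 2 = lam k := by
    intro k
    have hmv : (Zᵀ * Z) *ᵥ u k = lam k • u k := hA.mulVec_eigenvectorBasis k
    have h1 : ∑ i, (Z *ᵥ u k) i ^ 2 = (Z *ᵥ u k) ⬝ᵥ (Z *ᵥ u k) := by
      simp [dotProduct, sq]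
    rw [h1]
    have h2 : u k ⬝ᵥ ((Zᵀ * Z) *ᵥ u k) = (Z *ᵥ u k) ⬝ᵥ (Z *ᵥ u k) := by
      rw [← Matrix.mulVec_mulVec, dotProduct_mulVec, Matrix.vecMul_transpose]
    rw [← h2, hmv, dotProduct_smul]
    have h3 : u k ⬝ᵥ u k = 1 := by
      have := hortho k k
      rw [if_pos rfl] at this
      simpa [dotProduct] using this
    rw [smul_eq_mul]
    rw [dotProduct_comm] at h3
    rw [h3, mul_one]
  -- diagonal entry expansion
  have hdiag : ∀ i, Z i i = ∑ k, (Z *ᵥ u k) i * u k i := by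
    intro i
    have : ∑ k, (Z *ᵥ u k) i * u k i = ∑ k, ∑ j, Z i j * u k j * u k i := by
      refine Finset.sum_congr rfl fun k _ => ?_
      rw [Matrix.mulVec, dotProduct, Finset.sum_mul]
    rw [this, Finset.sum_comm]
    have : ∀ j, ∑ k, Z i j * u k j * u k i = Z i j * (if j = i then 1 else 0) := by
      intro j
      rw [← hrow j i, Finset.mul_sum]
      refine Finset.sum_congr rfl fun k _ => by ring
    rw [Finset.sum_congr rfl fun j _ => this j]
    simp
  -- Cauchy–Schwarz per k
  have hCS : ∀ k, ∑ i, |(Z *ᵥ u k) i * u k i| ≤ Real.sqrt (lam k) := by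
    intro k
    have h1 : ∑ i, |(Z *ᵥ u k) i * u k i| = ∑ i, |(Z *ᵥ u k) i| * |u k i| := by
      refine Finset.sum_congr rfl fun i _ => abs_mul _ _
    have hcs := Finset.sum_mul_sq_le_sq_mul_sq Finset.univ
      (fun i => |(Z *ᵥ u k) i|) (fun i => |u k i|)
    have h2 : (∑ i, |(Z *ᵥ u k) i| ^ 2) = lam k := by
      rw [← hZu k]
      exact Finset.sum_congr rfl fun i _ => sq_abs _
    have h3 : (∑ i, |u k i| ^ 2) = 1 := by
      have := hortho k k
      rw [if_pos rfl] at this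
      rw [← this]
      exact Finset.sum_congr rfl fun i _ => by rw [sq_abs, sq]
    rw [h2, h3, mul_one] at hcs
    rw [h1]
    have h4 : 0 ≤ ∑ i, |(Z *ᵥ u k) i| * |u k i| :=
      Finset.sum_nonneg fun i _ => mul_nonneg (abs_nonneg _) (abs_nonneg _)
    have := Real.sqrt_le_sqrt hcs
    rwa [Real.sqrt_sq h4] at this
  -- put together
  calc ∑ i, |Z i i| = ∑ i, |∑ k, (Z *ᵥ u k) i * u k i| := by
        exact Finset.sum_congr rfl fun i _ => by rw [hdiag i]
    _ ≤ ∑ i, ∑ k, |(Z *ᵥ u k) i * u k i| :=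
        Finset.sum_le_sum fun i _ => Finset.abs_sum_le_sum_abs _ _
    _ = ∑ k, ∑ i, |(Z *ᵥ u k) i * u k i| := Finset.sum_comm
    _ ≤ ∑ k, Real.sqrt (lam k) := Finset.sum_le_sum fun k _ => hCS k
    _ = traceNorm Z := htn.symm

end LemB

section IteVec

/-- The vector with value `v₁` on indices `< R`, `v₂` at index `R`, and `0` above. -/
noncomputable def iteVec (N R : ℕ) (v₁ v₂ : ℝ) : Fin N → ℝ :=
  fun i => if (i : ℕ) < R then v₁ else if (i : ℕ) = R then v₂ else 0

variable {N R : ℕ}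

theorem iteVec_sum (hr : R < N) (v₁ v₂ : ℝ) :
    ∑ i, iteVec N R v₁ v₂ i = R * v₁ + v₂ :=
  sum_ite_fin hr v₁ v₂

theorem iteVec_abs (v₁ v₂ : ℝ) :
    (fun i => |iteVec N R v₁ v₂ i|) = iteVec N R |v₁| |v₂| := by
  funext i; unfold iteVec; split_ifs <;> simp

theorem iteVec_antitone {v₁ v₂ : ℝ} (h2 : 0 ≤ v₂) (h12 : v₂ ≤ v₁) :
    Antitone (iteVec N R v₁ v₂) := by
  intro i j hij
  have hij' : (i : ℕ) ≤ (j : ℕ) := hij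
  unfold iteVec
  split_ifs <;> first | rfl | omega | linarith

theorem iteVec_sub (v₁ v₂ w₁ w₂ : ℝ) :
    iteVec N R v₁ v₂ - iteVec N R w₁ w₂ = iteVec N R (v₁ - w₁) (v₂ - w₂) := by
  funext i; simp only [Pi.sub_apply]; unfold iteVec; split_ifs <;> ring

theorem iteVec_sub' (v₁ v₂ w₁ w₂ : ℝ) :
    (fun i => iteVec N R v₁ v₂ i - iteVec N R w₁ w₂ i) = iteVec N R (v₁ - w₁) (v₂ - w₂) := by
  funext i; unfold iteVec; split_ifs <;> ring

theorem iteVec_smul (c v₁ v₂ : ℝ) :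
    c • iteVec N R v₁ v₂ = iteVec N R (c * v₁) (c * v₂) := by
  funext i; simp only [Pi.smul_apply, smul_eq_mul]; unfold iteVec; split_ifs <;> ring

theorem iteVec_mul_self (v₁ v₂ w₁ w₂ : ℝ) :
    (fun i => iteVec N R v₁ v₂ i * iteVec N R w₁ w₂ i) = iteVec N R (v₁ * w₁) (v₂ * w₂) := by
  funext i; unfold iteVec; split_ifs <;> ring

theorem iteVec_sq (v₁ v₂ : ℝ) :
    (fun i => iteVec N R v₁ v₂ i ^ 2) = iteVec N R (v₁ ^ 2) (v₂ ^ 2) := by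
  funext i; unfold iteVec; split_ifs <;> ring

theorem svalsFin_iteVec (hr : R < N) {v₁ v₂ : ℝ} (h12 : |v₂| ≤ |v₁|) :
    svalsFin (Matrix.diagonal (iteVec N R v₁ v₂)) = iteVec N R |v₁| |v₂| := by
  rw [svalsFin_diagonal _ (by rw [iteVec_abs]; exact iteVec_antitone (abs_nonneg _) h12),
    iteVec_abs]

theorem traceNorm_iteVec (hr : R < N) {v₁ v₂ : ℝ} (h12 : |v₂| ≤ |v₁|) :
    traceNorm (Matrix.diagonal (iteVec N R v₁ v₂)) = R * |v₁| + |v₂| := by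
  rw [traceNorm]
  have := svalsFin_iteVec hr h12
  rw [this, iteVec_sum hr]

theorem card_iteVec_ne (hr : R < N) {v₁ v₂ : ℝ} (h₁ : v₁ ≠ 0) (h₂ : v₂ ≠ 0) :
    Fintype.card {i : Fin N // iteVec N R v₁ v₂ i ≠ 0} = R + 1 := by
  rw [Fintype.card_congr (Equiv.subtypeEquivRight (q := fun i : Fin N => (i : ℕ) < R + 1)
    (fun i => by unfold iteVec; split_ifs <;> simp_all <;> omega))]
  exact card_subtype_fin_lt (by omega)

theorem card_iteVec_ne' (hr : R < N) {v₁ : ℝ} (h₁ : v₁ ≠ 0) :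
    Fintype.card {i : Fin N // iteVec N R v₁ 0 i ≠ 0} = R := by
  rw [Fintype.card_congr (Equiv.subtypeEquivRight (q := fun i : Fin N => (i : ℕ) < R)
    (fun i => by unfold iteVec; split_ifs <;> simp_all))]
  exact card_subtype_fin_lt (by omega)

theorem rank_iteVec (hr : R < N) {v₁ v₂ : ℝ} (h₁ : v₁ ≠ 0) (h₂ : v₂ ≠ 0) :
    (Matrix.diagonal (iteVec N R v₁ v₂)).rank = R + 1 := by
  rw [Matrix.rank_diagonal, card_iteVec_ne hr h₁ h₂]

theorem rank_iteVec' (hr : R < N) {v₁ : ℝ} (h₁ : v₁ ≠ 0) :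
    (Matrix.diagonal (iteVec N R v₁ 0)).rank = R := by
  rw [Matrix.rank_diagonal, card_iteVec_ne' hr h₁]

/-- Frobenius inner product against a diagonal matrix sees only the diagonal. -/
theorem frobInner_diagonal {N : ℕ} (w : Fin N → ℝ) (B : Matrix (Fin N) (Fin N) ℝ) :
    frobInner (Matrix.diagonal w) B = ∑ i, w i * B i i := by
  unfold frobInner
  refine Finset.sum_congr rfl fun i _ => ?_
  rw [Finset.sum_eq_single i]
  · rw [Matrix.diagonal_apply_eq]
  · intro j _ hj
    rw [Matrix.diagonal_apply_ne _ (Ne.symm hj), zero_mul]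
  · intro h; exact absurd (Finset.mem_univ i) h

theorem frobsq_diagonal {N : ℕ} (w : Fin N → ℝ) :
    ∑ i, ∑ j, (Matrix.diagonal w i j) ^ 2 = ∑ i, w i ^ 2 := by
  refine Finset.sum_congr rfl fun i _ => ?_
  rw [Finset.sum_eq_single i]
  · rw [Matrix.diagonal_apply_eq]
  · intro j _ hj
    rw [Matrix.diagonal_apply_ne _ (Ne.symm hj)]; ring
  · intro h; exact absurd (Finset.mem_univ i) h

theorem matrix_eq_of_frobsq_nonpos {N : ℕ} {M : Matrix (Fin N) (Fin N) ℝ}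
    (h : ∑ i, ∑ j, M i j ^ 2 ≤ 0) : M = 0 := by
  have h0 : ∀ i ∈ Finset.univ, (0:ℝ) ≤ ∑ j, M i j ^ 2 :=
    fun i _ => Finset.sum_nonneg fun j _ => sq_nonneg _
  have hz : ∑ i, ∑ j, M i j ^ 2 = 0 := le_antisymm h (Finset.sum_nonneg h0)
  ext i j
  have hrow := (Finset.sum_eq_zero_iff_of_nonneg h0).mp hz i (Finset.mem_univ i)
  have := (Finset.sum_eq_zero_iff_of_nonneg
    (fun j _ => sq_nonneg (M i j))).mp hrow j (Finset.mem_univ j)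
  simpa using pow_eq_zero_iff (n := 2) (by norm_num) |>.mp this

end IteVec

section MoreAux

theorem frobInner_add_right {N : ℕ} (A B C : Matrix (Fin N) (Fin N) ℝ) :
    frobInner A (B + C) = frobInner A B + frobInner A C := by
  simp [frobInner, Matrix.add_apply, mul_add, Finset.sum_add_distrib]

theorem frobInner_smul_right {N : ℕ} (c : ℝ) (A B : Matrix (Fin N) (Fin N) ℝ) :
    frobInner A (c • B) = c * frobInner A B := by
  simp [frobInner, Matrix.smul_apply, smul_eq_mul, Finset.mul_sum, mul_left_comm]

theorem sum_diagonal_mul {N : ℕ} (w : Fin N → ℝ) (B : Matrix (Fin N) (Fin N) ℝ) :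
    ∑ i, ∑ j, Matrix.diagonal w i j * B i j = ∑ i, w i * B i i := by
  refine Finset.sum_congr rfl fun i _ => ?_
  rw [Finset.sum_eq_single i]
  · rw [Matrix.diagonal_apply_eq]
  · intro j _ hj
    rw [Matrix.diagonal_apply_ne _ (Ne.symm hj), zero_mul]
  · intro h; exact absurd (Finset.mem_univ i) h

theorem frobsq_expand {N : ℕ} (A B C : Matrix (Fin N) (Fin N) ℝ) :
    ∑ i, ∑ j, (A - C) i j ^ 2
      = ∑ i, ∑ j, (A - B) i j ^ 2 + 2 * (∑ i, ∑ j, (A - B) i j * (B - C) i j)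
        + ∑ i, ∑ j, (B - C) i j ^ 2 := by
  have hpt : ∀ i j, (A - C) i j ^ 2
      = (A - B) i j ^ 2 + 2 * ((A - B) i j * (B - C) i j) + (B - C) i j ^ 2 := by
    intro i j
    simp only [Matrix.sub_apply]
    ring
  calc ∑ i, ∑ j, (A - C) i j ^ 2
      = ∑ i, ∑ j, ((A - B) i j ^ 2 + 2 * ((A - B) i j * (B - C) i j) + (B - C) i j ^ 2) :=
        Finset.sum_congr rfl fun i _ => Finset.sum_congr rfl fun j _ => hpt i j
    _ = _ := by
        simp only [Finset.sum_add_distrib, Finset.mul_sum]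

end MoreAux

set_option maxHeartbeats 2000000 in
/-- For `n` and `r ∈ {2,…,n−1}`, for all sufficiently small
`a ∈ (0,1)` and every `σ > 0` there is a convex `1`-smooth `f : ℝ^{n×n} → ℝ`
with a rank-`r` minimizer `X*` over the unit trace-norm ball such that
`#σ₁(∇f(X*)) = r+1` and `σ₁(∇f(X*)) − σ_{r+2}(∇f(X*)) = σ`, and a rank-`r`
matrix `X_a` with `‖X_a‖_* ≤ 1`, `‖X_a − X*‖_F ≤ √2·a`, and `rank(𝒢_η(X_a)) = r+1`
for every `η ∈ (0,1]`. -/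
theorem stmt4 (n : ℕ) (r : ℕ) (hr2 : 2 ≤ r) (hrn : r < n) :
    ∃ a0 : ℝ, 0 < a0 ∧ a0 < 1 ∧ ∀ a : ℝ, 0 < a → a ≤ a0 → ∀ σ : ℝ, 0 < σ →
    ∃ (f : Matrix (Fin n) (Fin n) ℝ → ℝ)
      (gradf : Matrix (Fin n) (Fin n) ℝ → Matrix (Fin n) (Fin n) ℝ),
      ConvexOn ℝ Set.univ f ∧
      (∀ X, HasFDerivAt f (frobCLM (gradf X)) X) ∧
      (∀ X Y, frobNorm (gradf X - gradf Y) ≤ 1 * frobNorm (X - Y)) ∧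
      ∃ Xstar Xa : Matrix (Fin n) (Fin n) ℝ,
        traceNorm Xstar ≤ 1 ∧ (∀ Z, traceNorm Z ≤ 1 → f Xstar ≤ f Z) ∧
        Xstar.rank = r ∧
        multTop (gradf Xstar) = r + 1 ∧
        svalI (gradf Xstar) 0 - svalI (gradf Xstar) (r + 1) = σ ∧
        traceNorm Xa ≤ 1 ∧ Xa.rank = r ∧
        frobNorm (Xa - Xstar) ≤ Real.sqrt 2 * a ∧
        (∀ η : ℝ, 0 < η → η ≤ 1 →
          (projTraceBall 1 (Xa - η • gradf Xa)).rank = r + 1) := by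
  refine ⟨1/2, by norm_num, by norm_num, fun a ha ha0 σ hσ => ?_⟩
  have hr0 : 0 < r := by omega
  have hn0 : 0 < n := by omega
  have hrpos : (0:ℝ) < r := by exact_mod_cast hr0
  have hr1R : (0:ℝ) < (r:ℝ) + 1 := by positivity
  have ha1 : a < 1 := by linarith
  have h1a : 0 < 1 - a := by linarith
  set G : Matrix (Fin n) (Fin n) ℝ := Matrix.diagonal (iteVec n r σ σ) with hG
  refine ⟨fun X => frobInner G X, fun _ => G, ?_, ?_, ?_, ?_⟩
  · -- convexity
    refine ⟨convex_univ, fun x _ y _ p q hp hq hpq => le_of_eq ?_⟩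
    show frobInner G (p • x + q • y) = p • frobInner G x + q • frobInner G y
    rw [frobInner_add_right, frobInner_smul_right, frobInner_smul_right, smul_eq_mul, smul_eq_mul]
  · -- derivative
    intro X
    exact (frobCLM G).hasFDerivAt
  · -- 1-smoothness
    intro X Y
    rw [sub_self]
    have h0 : frobNorm (0 : Matrix (Fin n) (Fin n) ℝ) = 0 := by
      simp [frobNorm]
    rw [h0, one_mul]
    exact Real.sqrt_nonneg _
  set Xstar : Matrix (Fin n) (Fin n) ℝ := Matrix.diagonal (iteVec n r (-(1/r)) 0) with hXs
  set Xa : Matrix (Fin n) (Fin n) ℝ := Matrix.diagonal (iteVec n r (-((1-a)/r)) 0) with hXa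
  have habs1r : |(-(1/(r:ℝ)))| = 1/r := by
    rw [abs_neg, abs_of_pos (by positivity)]
  have habsar : |(-((1-a)/(r:ℝ)))| = (1-a)/r := by
    rw [abs_neg, abs_of_pos (by positivity)]
  have habs0 : |(0:ℝ)| = 0 := abs_zero
  refine ⟨Xstar, Xa, ?_, ?_, ?_, ?_, ?_, ?_, ?_, ?_, ?_⟩
  · -- traceNorm Xstar ≤ 1
    rw [hXs, traceNorm_iteVec hrn (by rw [habs1r, habs0]; positivity)]
    rw [habs1r, habs0]
    rw [mul_one_div, div_self (ne_of_gt hrpos), add_zero]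
  · -- minimizer
    intro Z hZ
    have hfs : frobInner G Xstar = -σ := by
      rw [hG, frobInner_diagonal]
      have hpt : ∀ i, iteVec n r σ σ i * Xstar i i
          = iteVec n r (σ * (-(1/r))) (σ * 0) i := by
        intro i
        rw [hXs, Matrix.diagonal_apply_eq]
        exact congrFun (iteVec_mul_self σ σ (-(1/r)) 0) i
      rw [Finset.sum_congr rfl fun i _ => hpt i, iteVec_sum hrn]
      field_simp
      ring
    have hfz : -σ ≤ frobInner G Z := by
      rw [hG, frobInner_diagonal]
      have hterm : ∀ i, -(σ * |Z i i|) ≤ iteVec n r σ σ i * Z i i := by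
        intro i
        unfold iteVec
        have h1 : -(σ * |Z i i|) ≤ σ * Z i i := by
          have := mul_le_mul_of_nonneg_left (neg_abs_le (Z i i)) hσ.le
          linarith
        have h2 : -(σ * |Z i i|) ≤ 0 := by
          have : 0 ≤ σ * |Z i i| := mul_nonneg hσ.le (abs_nonneg _)
          linarith
        split_ifs
        · exact h1
        · exact h1
        · rw [zero_mul]; exact h2
      have hsum : ∑ i, -(σ * |Z i i|) ≤ ∑ i, iteVec n r σ σ i * Z i i :=
        Finset.sum_le_sum fun i _ => hterm i
      have habs : ∑ i, |Z i i| ≤ 1 := le_trans (sum_abs_diag_le_traceNorm Z) hZ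
      have : ∑ i, -(σ * |Z i i|) = -(σ * ∑ i, |Z i i|) := by
        rw [Finset.mul_sum, Finset.sum_neg_distrib]
      rw [this] at hsum
      have : -σ ≤ -(σ * ∑ i, |Z i i|) := by nlinarith
      linarith
    calc frobInner G Xstar = -σ := hfs
      _ ≤ frobInner G Z := hfz
  · -- rank Xstar = r
    rw [hXs]
    refine rank_iteVec' hrn ?_
    have hpos : 0 < 1/(r:ℝ) := by positivity
    intro h
    rw [neg_eq_zero] at h
    rw [h] at hpos
    exact lt_irrefl 0 hpos
  · -- multTop
    have hsv : svalsFin G = iteVec n r |σ| |σ| := by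
      rw [hG]; exact svalsFin_iteVec hrn le_rfl
    have habsσ : |σ| = σ := abs_of_pos hσ
    have hsv0 : svalI G 0 = σ := by
      unfold svalI
      rw [dif_pos hn0, hsv]
      unfold iteVec
      have hval : ((⟨0, hn0⟩ : Fin n) : ℕ) = 0 := rfl
      simp only [hval]
      rw [if_pos hr0, habsσ]
    unfold multTop
    rw [hsv0]
    rw [Nat.card_eq_fintype_card]
    rw [Fintype.card_congr (Equiv.subtypeEquivRight (q := fun i : Fin n => (i : ℕ) < r + 1)
      (fun i => by
        rw [hsv]
        unfold iteVec
        rw [habsσ]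
        split_ifs with h1 h2
        · exact iff_of_true rfl (by omega)
        · exact iff_of_true rfl (by omega)
        · exact iff_of_false (fun h => hσ.ne' h.symm) (by omega)))]
    exact card_subtype_fin_lt (by omega)
  · -- singular value gap
    have hsv : svalsFin G = iteVec n r |σ| |σ| := by
      rw [hG]; exact svalsFin_iteVec hrn le_rfl
    have habsσ : |σ| = σ := abs_of_pos hσ
    have hsv0 : svalI G 0 = σ := by
      unfold svalI
      rw [dif_pos hn0, hsv]
      unfold iteVec
      have hval : ((⟨0, hn0⟩ : Fin n) : ℕ) = 0 := rfl
      simp only [hval]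
      rw [if_pos hr0, habsσ]
    have hsvr : svalI G (r+1) = 0 := by
      unfold svalI
      by_cases h : r + 1 < n
      · rw [dif_pos h, hsv]
        unfold iteVec
        have hval : ((⟨r+1, h⟩ : Fin n) : ℕ) = r + 1 := rfl
        simp only [hval]
        rw [if_neg (by omega), if_neg (by omega)]
      · rw [dif_neg h]
    rw [hsv0, hsvr, sub_zero]
  · -- traceNorm Xa ≤ 1
    rw [hXa, traceNorm_iteVec hrn (by rw [habsar, habs0]; positivity)]
    rw [habsar, habs0, add_zero, mul_div_cancel₀ _ (ne_of_gt hrpos)]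
    linarith
  · -- rank Xa = r
    rw [hXa]
    refine rank_iteVec' hrn ?_
    have hpos : 0 < (1-a)/(r:ℝ) := by positivity
    intro h
    rw [neg_eq_zero] at h
    rw [h] at hpos
    exact lt_irrefl 0 hpos
  · -- frobNorm (Xa - Xstar) ≤ √2 a
    have hsub : Xa - Xstar = Matrix.diagonal (iteVec n r (a/r) 0) := by
      rw [hXa, hXs, Matrix.diagonal_sub, iteVec_sub']
      have h1 : (-((1-a)/(r:ℝ)) - -(1/r)) = a/r := by ring
      have h2 : (0:ℝ) - 0 = 0 := by ring
      rw [h1, h2]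
    rw [hsub]
    unfold frobNorm
    rw [frobsq_diagonal]
    have h1 : (fun i => iteVec n r (a/r) 0 i ^ 2) = iteVec n r ((a/r)^2) 0 := by
      rw [iteVec_sq]; norm_num
    rw [Finset.sum_congr rfl fun i _ => congrFun h1 i, iteVec_sum hrn, add_zero]
    have h2 : Real.sqrt 2 * a = Real.sqrt (2 * a^2) := by
      rw [Real.sqrt_mul (by norm_num), Real.sqrt_sq ha.le]
    rw [h2]
    apply Real.sqrt_le_sqrt
    have hr1 : (1:ℝ) ≤ r := by exact_mod_cast hr0
    have : (r:ℝ) * (a/r)^2 = a^2/r := by field_simp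
    rw [this]
    rw [div_le_iff₀ hrpos]
    nlinarith [sq_nonneg a]
  · -- projection rank
    intro η hη hη1
    have hησ : 0 < η * σ := mul_pos hη hσ
    set lam := max 0 (η*σ - a/((r:ℝ)+1)) with hlamdef
    have hlam0 : 0 ≤ lam := le_max_left _ _
    have hlamlt : lam < η*σ := by
      apply max_lt hησ
      have : 0 < a/((r:ℝ)+1) := by positivity
      linarith
    set y₁ : ℝ := -((1-a)/r + η*σ) with hy1
    set y₂ : ℝ := -(η*σ) with hy2
    set p₁ : ℝ := -((1-a)/r + η*σ - lam) with hp1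
    set p₂ : ℝ := -(η*σ - lam) with hp2
    have har : 0 < (1-a)/(r:ℝ) := by positivity
    have hp1neg : p₁ < 0 := by rw [hp1]; linarith
    have hp2neg : p₂ < 0 := by rw [hp2]; linarith
    have habsp1 : |p₁| = (1-a)/r + η*σ - lam := by
      rw [abs_of_neg hp1neg, hp1]; ring
    have habsp2 : |p₂| = η*σ - lam := by
      rw [abs_of_neg hp2neg, hp2]; ring
    set P : Matrix (Fin n) (Fin n) ℝ := Matrix.diagonal (iteVec n r p₁ p₂) with hP
    set Y' : Matrix (Fin n) (Fin n) ℝ := Matrix.diagonal (iteVec n r y₁ y₂) with hY'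
    have hY : Xa - η • G = Y' := by
      rw [hXa, hG, hY', ← Matrix.diagonal_smul, iteVec_smul, Matrix.diagonal_sub, iteVec_sub']
      have h1 : (-((1-a)/(r:ℝ)) - η * σ) = y₁ := by rw [hy1]; ring
      have h2 : ((0:ℝ) - η * σ) = y₂ := by rw [hy2]; ring
      rw [h1, h2]
    have htnP : traceNorm P = (1-a) + ((r:ℝ)+1)*(η*σ - lam) := by
      rw [hP, traceNorm_iteVec hrn (by rw [habsp1, habsp2]; linarith)]
      rw [habsp1, habsp2]
      field_simp
      ring
    have hkey : lam = 0 ∨ traceNorm P = 1 := by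
      rcases le_or_gt (η*σ - a/((r:ℝ)+1)) 0 with h | h
      · exact Or.inl (max_eq_left h)
      · right
        rw [htnP, hlamdef, max_eq_right h.le]
        field_simp
        ring
    have htnP1 : traceNorm P ≤ 1 := by
      rcases hkey with h | h
      · rw [htnP, h, sub_zero]
        rcases le_or_gt (η*σ - a/((r:ℝ)+1)) 0 with h2 | h2
        · have : ((r:ℝ)+1) * (η*σ) ≤ ((r:ℝ)+1) * (a/((r:ℝ)+1)) := by
            apply mul_le_mul_of_nonneg_left _ (le_of_lt hr1R)
            linarith
          rw [mul_div_cancel₀ _ (ne_of_gt hr1R)] at this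
          linarith
        · exfalso
          have := max_eq_right h2.le
          rw [hlamdef] at h
          linarith [h ▸ this]
      · linarith [h.le]
    have hYP : Y' - P = Matrix.diagonal (iteVec n r (-lam) (-lam)) := by
      rw [hY', hP, Matrix.diagonal_sub, iteVec_sub']
      have h1 : y₁ - p₁ = -lam := by rw [hy1, hp1]; ring
      have h2 : y₂ - p₂ = -lam := by rw [hy2, hp2]; ring
      rw [h1, h2]
    -- the variational inequality
    have hVI : ∀ Z : Matrix (Fin n) (Fin n) ℝ, traceNorm Z ≤ 1 →
        (∑ i, ∑ j, (Y' - P) i j ^ 2) + (∑ i, ∑ j, (P - Z) i j ^ 2)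
          ≤ ∑ i, ∑ j, (Y' - Z) i j ^ 2 := by
      intro Z hZ
      have hexp := frobsq_expand Y' P Z
      have hcross : 0 ≤ ∑ i, ∑ j, (Y' - P) i j * (P - Z) i j := by
        rw [hYP]
        rw [show ∑ i, ∑ j, (Matrix.diagonal (iteVec n r (-lam) (-lam))) i j * (P - Z) i j
            = ∑ i, iteVec n r (-lam) (-lam) i * (P - Z) i i from sum_diagonal_mul _ _]
        rcases hkey with h0 | h1
        · have : ∀ i, iteVec n r (-lam) (-lam) i * (P - Z) i i = 0 := by
            intro i
            unfold iteVec
            simp only [h0, neg_zero]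
            split_ifs <;> ring
          rw [Finset.sum_congr rfl fun i _ => this i]
          simp
        · have hsplit : ∑ i, iteVec n r (-lam) (-lam) i * (P - Z) i i
              = (∑ i, iteVec n r (-lam) (-lam) i * P i i)
                - ∑ i, iteVec n r (-lam) (-lam) i * Z i i := by
            rw [← Finset.sum_sub_distrib]
            refine Finset.sum_congr rfl fun i _ => ?_
            rw [Matrix.sub_apply]
            ring
          have hS1 : ∑ i, iteVec n r (-lam) (-lam) i * P i i = lam := by
            have hpt : ∀ i, iteVec n r (-lam) (-lam) i * P i i
                = iteVec n r (-lam * p₁) (-lam * p₂) i := by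
              intro i
              rw [hP, Matrix.diagonal_apply_eq]
              exact congrFun (iteVec_mul_self (-lam) (-lam) p₁ p₂) i
            rw [Finset.sum_congr rfl fun i _ => hpt i, iteVec_sum hrn]
            have htn' : (r:ℝ) * ((1-a)/r + η*σ - lam) + (η*σ - lam) = 1 := by
              have := h1
              rw [htnP] at this
              have hfs : (r:ℝ) * ((1-a)/r + η*σ - lam) + (η*σ - lam)
                  = (1-a) + ((r:ℝ)+1)*(η*σ - lam) := by
                field_simp
                ring
              linarith [hfs]
            have : (r:ℝ) * (-lam * p₁) + (-lam * p₂)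
                = lam * ((r:ℝ) * ((1-a)/r + η*σ - lam) + (η*σ - lam)) := by
              rw [hp1, hp2]; ring
            rw [this, htn']
            ring
          have hSZ : ∑ i, iteVec n r (-lam) (-lam) i * Z i i ≤ lam := by
            have hterm : ∀ i, iteVec n r (-lam) (-lam) i * Z i i ≤ lam * |Z i i| := by
              intro i
              unfold iteVec
              split_ifs
              · nlinarith [neg_abs_le (Z i i), abs_nonneg (Z i i), hlam0]
              · nlinarith [neg_abs_le (Z i i), abs_nonneg (Z i i), hlam0]
              · rw [zero_mul]; positivity
            have h2 : ∑ i, iteVec n r (-lam) (-lam) i * Z i i ≤ ∑ i, lam * |Z i i| :=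
              Finset.sum_le_sum fun i _ => hterm i
            have h3 : ∑ i, lam * |Z i i| = lam * ∑ i, |Z i i| := by
              rw [Finset.mul_sum]
            have h4 : ∑ i, |Z i i| ≤ 1 := le_trans (sum_abs_diag_le_traceNorm Z) hZ
            nlinarith [h2, h3 ▸ h2]
          rw [hsplit, hS1]
          linarith
      have hPZ : 0 ≤ ∑ i, ∑ j, (P - Z) i j ^ 2 :=
        Finset.sum_nonneg fun i _ => Finset.sum_nonneg fun j _ => sq_nonneg _
      linarith
    have hproj : IsTraceBallProj 1 Y' P := by
      refine ⟨htnP1, fun Z hZ => ?_⟩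
      unfold frobNorm
      apply Real.sqrt_le_sqrt
      have := hVI Z hZ
      have hPZ : 0 ≤ ∑ i, ∑ j, (P - Z) i j ^ 2 :=
        Finset.sum_nonneg fun i _ => Finset.sum_nonneg fun j _ => sq_nonneg _
      linarith
    have hex : ∃ Q, IsTraceBallProj 1 Y' Q := ⟨P, hproj⟩
    have hchoose : projTraceBall 1 Y' = hex.choose := dif_pos hex
    have hspec := hex.choose_spec
    have huniq : hex.choose = P := by
      have h1 : frobNorm (Y' - hex.choose) ≤ frobNorm (Y' - P) :=
        hspec.2 P htnP1
      have hnn : (0:ℝ) ≤ ∑ i, ∑ j, (Y' - P) i j ^ 2 :=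
        Finset.sum_nonneg fun i _ => Finset.sum_nonneg fun j _ => sq_nonneg _
      have h2 : ∑ i, ∑ j, (Y' - hex.choose) i j ^ 2 ≤ ∑ i, ∑ j, (Y' - P) i j ^ 2 := by
        have hfr : Real.sqrt (∑ i, ∑ j, (Y' - hex.choose) i j ^ 2)
            ≤ Real.sqrt (∑ i, ∑ j, (Y' - P) i j ^ 2) := h1
        exact (Real.sqrt_le_sqrt_iff hnn).mp hfr
      have h3 := hVI hex.choose hspec.1
      have h4 : ∑ i, ∑ j, (P - hex.choose) i j ^ 2 ≤ 0 := by linarith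
      have h5 : P - hex.choose = 0 := matrix_eq_of_frobsq_nonpos h4
      have := sub_eq_zero.mp h5
      exact this.symm
    show (projTraceBall 1 (Xa - η • G)).rank = r + 1
    rw [hY, hchoose, huniq, hP]
    exact rank_iteVec hrn (ne_of_lt hp1neg) (ne_of_lt hp2neg)
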